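/- Let G be a bounded operator on L²(R^3) with a positive integral kernel and suppose ‖G χ_n‖ ≤ b n for all integers n ≥ 1, where χ_n is multiplication by the indicator of the ball of radius n and b > 0. Then for any α > 3/2, ‖G η_{−α}‖ ≤ b (1 + Σ_{n=2}^∞ n²(n−1)^{−2α})^{1/2} < ∞, where η_{−α}(x) = min(1, |x|^{−α}). -/

import Mathlib

open MeasureTheory RealInnerProductSpace Filter Topology

lemma helper_norm_le {X : Type*} [MeasurableSpace X] {μ : Measure X} (u v : Lp ℝ 2 μ) {c : ℝ}
    (hc : 0 ≤ c) (h : ∀ᵐ x ∂μ, |(u : X → ℝ) x| ≤ c * |(v : X → ℝ) x|) : ‖u‖ ≤ c * ‖v‖ := by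
  have h2 := eLpNorm_le_nnreal_smul_eLpNorm_of_ae_le_mul (μ := μ) (c := c.toNNReal)
      (f := (u : X → ℝ)) (g := (v : X → ℝ))
      (by filter_upwards [h] with x hx
          rw [← NNReal.coe_le_coe]
          simpa [Real.coe_toNNReal c hc, Real.norm_eq_abs] using hx) 2
  have hfin : (c.toNNReal • eLpNorm (v : X → ℝ) 2 μ) ≠ ⊤ := by
    simp only [ENNReal.smul_def, smul_eq_mul]
    exact ENNReal.mul_ne_top (by simp) (Lp.eLpNorm_ne_top v)
  calc ‖u‖ = (eLpNorm (u : X → ℝ) 2 μ).toReal := Lp.norm_def u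
    _ ≤ (c.toNNReal • eLpNorm (v : X → ℝ) 2 μ).toReal := ENNReal.toReal_mono hfin h2
    _ = c * ‖v‖ := by
        simp [ENNReal.smul_def, ENNReal.toReal_mul, Real.coe_toNNReal c hc, Lp.norm_def]

lemma helper_inner_zero {X : Type*} [MeasurableSpace X] {μ : Measure X} (u v : Lp ℝ 2 μ)
    (h : ∀ᵐ x ∂μ, (u : X → ℝ) x * (v : X → ℝ) x = 0) : ⟪u, v⟫ = 0 := by
  rw [L2.inner_def]
  rw [integral_congr_ae (g := fun _ => (0:ℝ)) (by filter_upwards [h] with x hx; simpa [or_comm] using hx)]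
  simp

set_option maxHeartbeats 2000000 in
theorem green_times_eta_bounded (α b : ℝ) (hα : 3 / 2 < α) (hb : 0 < b)
    (G : Lp ℝ 2 (volume : Measure (EuclideanSpace ℝ (Fin 3))) →L[ℝ]
         Lp ℝ 2 (volume : Measure (EuclideanSpace ℝ (Fin 3))))
    -- G has a positive integral kernel: it is positivity preserving
    (hGpos : ∀ f : Lp ℝ 2 (volume : Measure (EuclideanSpace ℝ (Fin 3))),
      (0 ≤ᵐ[volume] (f : EuclideanSpace ℝ (Fin 3) → ℝ)) →
      0 ≤ᵐ[volume] (G f : EuclideanSpace ℝ (Fin 3) → ℝ))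
    -- multiplication by the indicator of the ball of radius n
    (Mχ : ℕ → (Lp ℝ 2 (volume : Measure (EuclideanSpace ℝ (Fin 3))) →L[ℝ]
               Lp ℝ 2 (volume : Measure (EuclideanSpace ℝ (Fin 3)))))
    (hMχ : ∀ (n : ℕ) (f : Lp ℝ 2 (volume : Measure (EuclideanSpace ℝ (Fin 3)))),
      (Mχ n f : EuclideanSpace ℝ (Fin 3) → ℝ) =ᵐ[volume]
        fun x => if ‖x‖ ≤ (n : ℝ) then f x else 0)
    -- multiplication by η_{-α}
    (Mη : Lp ℝ 2 (volume : Measure (EuclideanSpace ℝ (Fin 3))) →L[ℝ]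
          Lp ℝ 2 (volume : Measure (EuclideanSpace ℝ (Fin 3))))
    (hMη : ∀ f : Lp ℝ 2 (volume : Measure (EuclideanSpace ℝ (Fin 3))),
      (Mη f : EuclideanSpace ℝ (Fin 3) → ℝ) =ᵐ[volume]
        fun x => (if ‖x‖ ≤ 1 then 1 else ‖x‖ ^ (-α)) * f x)
    (hGχ : ∀ n : ℕ, 1 ≤ n → ‖G.comp (Mχ n)‖ ≤ b * n) :
    ‖G.comp Mη‖ ≤ b * Real.sqrt (1 + ∑' n : ℕ, ((n : ℝ) + 2) ^ 2 * ((n : ℝ) + 1) ^ (-(2 * α))) := by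
  classical
  have hα0 : 0 < α := by linarith
  set S : ℝ := ∑' n : ℕ, ((n : ℝ) + 2) ^ 2 * ((n : ℝ) + 1) ^ (-(2 * α)) with hSdef
  have hsum : Summable (fun n : ℕ => ((n : ℝ) + 2) ^ 2 * ((n : ℝ) + 1) ^ (-(2 * α))) := by
    have h1 : Summable (fun n : ℕ => ((n : ℝ)) ^ ((2:ℝ) - 2 * α)) :=
      Real.summable_nat_rpow.mpr (by linarith)
    have h2 : Summable (fun n : ℕ => ((n : ℝ) + 1) ^ ((2:ℝ) - 2 * α)) := by
      have := (summable_nat_add_iff 1).mpr h1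
      simpa using this
    refine Summable.of_nonneg_of_le (fun n => by positivity) (fun n => ?_) (h2.mul_left 4)
    have hp : (0:ℝ) < (n : ℝ) + 1 := by positivity
    have hsq : ((n : ℝ) + 2) ^ 2 ≤ 4 * ((n : ℝ) + 1) ^ 2 := by nlinarith [sq_nonneg ((n:ℝ))]
    calc ((n : ℝ) + 2) ^ 2 * ((n : ℝ) + 1) ^ (-(2 * α))
        ≤ 4 * ((n : ℝ) + 1) ^ 2 * ((n : ℝ) + 1) ^ (-(2 * α)) :=
          mul_le_mul_of_nonneg_right hsq (Real.rpow_nonneg hp.le _)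
      _ = 4 * ((n : ℝ) + 1) ^ ((2:ℝ) - 2 * α) := by
          rw [mul_assoc]
          congr 1
          rw [← Real.rpow_natCast ((n : ℝ) + 1) 2, ← Real.rpow_add hp]
          norm_num [sub_eq_add_neg]
  have hS0 : 0 ≤ S := tsum_nonneg (fun n => by positivity)
  set C := Real.sqrt (1 + S) with hCdef
  have hC0 : 0 ≤ C := Real.sqrt_nonneg _
  refine ContinuousLinearMap.opNorm_le_bound _ (by positivity) (fun f => ?_)
  rw [ContinuousLinearMap.comp_apply]
  set c : ℕ → ℝ := fun n => if n = 0 then 1 else (n : ℝ) ^ (-α) with hcdef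
  have hc0 : ∀ n, 0 ≤ c n := fun n => by
    by_cases h : n = 0 <;> simp [hcdef, h, Real.rpow_nonneg (Nat.cast_nonneg n)]
  set F : ℕ → Lp ℝ 2 (volume : Measure (EuclideanSpace ℝ (Fin 3))) :=
    fun n => Mχ (n + 1) f - Mχ n f with hFdef
  -- Mχ 0 f = 0
  have hχ0 : Mχ 0 f = 0 := by
    apply Lp.ext
    have hnull : ∀ᵐ x : EuclideanSpace ℝ (Fin 3) ∂volume, ¬ ‖x‖ ≤ ((0:ℕ) : ℝ) := by
      rw [ae_iff]
      have hsub : {x : EuclideanSpace ℝ (Fin 3) | ¬¬ ‖x‖ ≤ ((0:ℕ) : ℝ)} ⊆ {0} := by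
        intro x hx
        simp only [Set.mem_setOf_eq, not_not, Nat.cast_zero] at hx
        simpa using norm_le_zero_iff.mp hx
      exact measure_mono_null hsub (measure_singleton 0)
    refine (hMχ 0 f).trans (.trans ?_ (Lp.coeFn_zero ℝ 2 _).symm)
    filter_upwards [hnull] with x hx
    rw [if_neg hx]
    rfl
  have htele : ∀ N : ℕ, ∑ n ∈ Finset.range N, F n = Mχ N f := by
    intro N
    simp only [hFdef]
    rw [Finset.sum_range_sub (fun k => Mχ k f), hχ0, sub_zero]
  -- a.e. description of F n
  have hFae : ∀ n : ℕ, (F n : EuclideanSpace ℝ (Fin 3) → ℝ) =ᵐ[volume]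
      fun x => if ‖x‖ ≤ (n : ℝ) + 1 ∧ ¬ ‖x‖ ≤ (n : ℝ) then f x else 0 := by
    intro n
    filter_upwards [Lp.coeFn_sub (Mχ (n + 1) f) (Mχ n f), hMχ (n + 1) f, hMχ n f]
      with x h3 h4 h5
    push_cast at h4
    have hx : (F n : EuclideanSpace ℝ (Fin 3) → ℝ) x
        = (Mχ (n + 1) f : EuclideanSpace ℝ (Fin 3) → ℝ) x
          - (Mχ n f : EuclideanSpace ℝ (Fin 3) → ℝ) x := by
      simpa [hFdef] using h3
    rw [hx, h4, h5]
    by_cases h : ‖x‖ ≤ (n : ℝ)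
    · have h' : ‖x‖ ≤ (n : ℝ) + 1 := by linarith
      simp [h, h']
    · by_cases h' : ‖x‖ ≤ (n : ℝ) + 1 <;> simp [h, h']
  -- ‖Mχ N f‖ ≤ ‖f‖
  have hMχnorm : ∀ N : ℕ, ‖Mχ N f‖ ≤ ‖f‖ := by
    intro N
    have := helper_norm_le (Mχ N f) f (c := 1) zero_le_one ?_
    · simpa using this
    · filter_upwards [hMχ N f] with x hx
      rw [hx]
      split_ifs <;> simp [abs_nonneg]
  -- Pythagoras
  have horth : ∀ N : ℕ, ⟪Mχ N f, F N⟫ = 0 := by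
    intro N
    apply helper_inner_zero
    filter_upwards [hFae N, hMχ N f] with x h1 h2
    rw [h1, h2]
    by_cases h : ‖x‖ ≤ (N : ℝ) <;> simp [h]
  have hpyth : ∀ N : ℕ, ∑ n ∈ Finset.range N, ‖F n‖ ^ 2 = ‖Mχ N f‖ ^ 2 := by
    intro N
    induction N with
    | zero => simp [hχ0]
    | succ N ih =>
      rw [Finset.sum_range_succ, ih]
      have hdecomp : Mχ (N + 1) f = Mχ N f + F N := by
        simp only [hFdef]
        abel
      rw [hdecomp, norm_add_sq_real, horth N]
      ring
  have hsumF : ∀ N : ℕ, ∑ n ∈ Finset.range N, ‖F n‖ ^ 2 ≤ ‖f‖ ^ 2 := fun N => by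
    rw [hpyth N]
    exact pow_le_pow_left₀ (norm_nonneg _) (hMχnorm N) 2
  -- per-term estimate
  have hterm : ∀ n : ℕ, ‖G (Mη (F n))‖ ≤ (b * (((n : ℝ) + 1) * c n)) * ‖F n‖ := by
    intro n
    have hg : (Mη (F n) : EuclideanSpace ℝ (Fin 3) → ℝ) =ᵐ[volume] fun x =>
        (if ‖x‖ ≤ 1 then 1 else ‖x‖ ^ (-α)) *
          (if ‖x‖ ≤ (n : ℝ) + 1 ∧ ¬ ‖x‖ ≤ (n : ℝ) then f x else 0) := by
      filter_upwards [hMη (F n), hFae n] with x h1 h2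
      rw [h1, h2]
    have hfix : Mχ (n + 1) (Mη (F n)) = Mη (F n) := by
      apply Lp.ext
      filter_upwards [hMχ (n + 1) (Mη (F n)), hg] with x h1 h2
      push_cast at h1
      rw [h1]
      by_cases h : ‖x‖ ≤ (n : ℝ) + 1
      · rw [if_pos h]
      · have hcond : ¬(‖x‖ ≤ (n : ℝ) + 1 ∧ ¬ ‖x‖ ≤ (n : ℝ)) := fun hc => h hc.1
        rw [if_neg h, h2, if_neg hcond, mul_zero]
    have hgnorm : ‖Mη (F n)‖ ≤ c n * ‖F n‖ := by
      apply helper_norm_le _ _ (hc0 n)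
      filter_upwards [hg, hFae n] with x h1 h2
      rw [h1, h2]
      by_cases h : ‖x‖ ≤ (n : ℝ) + 1 ∧ ¬ ‖x‖ ≤ (n : ℝ)
      · rw [if_pos h, abs_mul]
        apply mul_le_mul_of_nonneg_right _ (abs_nonneg _)
        have hη0 : (0:ℝ) ≤ (if ‖x‖ ≤ 1 then (1:ℝ) else ‖x‖ ^ (-α)) := by
          split_ifs
          · norm_num
          · exact Real.rpow_nonneg (norm_nonneg x) _
        rw [abs_of_nonneg hη0]
        rcases Nat.eq_zero_or_pos n with hn | hn
        · subst hn
          simp only [hcdef, if_pos rfl]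
          split_ifs with h1'
          · exact le_rfl
          · exact Real.rpow_le_one_of_one_le_of_nonpos (le_of_not_ge h1') (by linarith)
        · have hn1 : (1:ℝ) ≤ (n : ℝ) := by exact_mod_cast hn
          have hxn : (n : ℝ) < ‖x‖ := lt_of_not_ge h.2
          have hx1 : ¬ ‖x‖ ≤ 1 := by push_neg; linarith
          rw [if_neg hx1]
          simp only [hcdef, if_neg (Nat.pos_iff_ne_zero.mp hn)]
          exact Real.rpow_le_rpow_of_nonpos (by linarith) hxn.le (by linarith)
      · rw [if_neg h, mul_zero, abs_zero]
        exact mul_nonneg (hc0 n) le_rfl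
    calc ‖G (Mη (F n))‖ = ‖(G.comp (Mχ (n + 1))) (Mη (F n))‖ := by
          rw [ContinuousLinearMap.comp_apply, hfix]
      _ ≤ ‖G.comp (Mχ (n + 1))‖ * ‖Mη (F n)‖ := ContinuousLinearMap.le_opNorm _ _
      _ ≤ (b * ((n : ℝ) + 1)) * (c n * ‖F n‖) := by
          apply mul_le_mul ?_ hgnorm (norm_nonneg _) (by positivity)
          have := hGχ (n + 1) (by omega)
          push_cast at this
          exact this
      _ = (b * (((n : ℝ) + 1) * c n)) * ‖F n‖ := by ring
  -- partial sums of the weights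
  have hq : ∀ N : ℕ, ∑ n ∈ Finset.range N, (((n : ℝ) + 1) * c n) ^ 2 ≤ 1 + S := by
    intro N
    cases N with
    | zero => simp; linarith
    | succ M =>
      rw [Finset.sum_range_succ']
      have h0 : ((((0:ℕ) : ℝ) + 1) * c 0) ^ 2 = 1 := by simp [hcdef]
      have hqa : ∀ m : ℕ, ((((m + 1 : ℕ) : ℝ) + 1) * c (m + 1)) ^ 2
          = ((m : ℝ) + 2) ^ 2 * ((m : ℝ) + 1) ^ (-(2 * α)) := by
        intro m
        have hp : (0:ℝ) < (m : ℝ) + 1 := by positivity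
        simp only [hcdef, if_neg (Nat.succ_ne_zero m)]
        push_cast
        rw [mul_pow]
        congr 1
        · ring
        · rw [← Real.rpow_natCast (((m : ℝ) + 1) ^ (-α)) 2, ← Real.rpow_mul hp.le]
          norm_num
          ring_nf
      rw [h0]
      have : ∑ i ∈ Finset.range M, ((((i + 1 : ℕ) : ℝ) + 1) * c (i + 1)) ^ 2
          = ∑ i ∈ Finset.range M, ((i : ℝ) + 2) ^ 2 * ((i : ℝ) + 1) ^ (-(2 * α)) :=
        Finset.sum_congr rfl (fun i _ => hqa i)
      rw [this]
      have hle : ∑ i ∈ Finset.range M, ((i : ℝ) + 2) ^ 2 * ((i : ℝ) + 1) ^ (-(2 * α)) ≤ S :=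
        hsum.sum_le_tsum _ (fun i _ => by positivity)
      linarith
  -- bound on the truncated operator
  have hmain : ∀ N : ℕ, ‖G (Mη (Mχ N f))‖ ≤ b * (C * ‖f‖) := by
    intro N
    have hsqrt2 : Real.sqrt (∑ n ∈ Finset.range N, ‖F n‖ ^ 2) ≤ ‖f‖ := by
      rw [show ‖f‖ = Real.sqrt (‖f‖ ^ 2) from (Real.sqrt_sq (norm_nonneg f)).symm]
      exact Real.sqrt_le_sqrt (hsumF N)
    calc ‖G (Mη (Mχ N f))‖ = ‖∑ n ∈ Finset.range N, G (Mη (F n))‖ := by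
          rw [← htele N, map_sum, map_sum]
      _ ≤ ∑ n ∈ Finset.range N, ‖G (Mη (F n))‖ := norm_sum_le _ _
      _ ≤ ∑ n ∈ Finset.range N, (b * (((n : ℝ) + 1) * c n)) * ‖F n‖ :=
          Finset.sum_le_sum (fun n _ => hterm n)
      _ = b * ∑ n ∈ Finset.range N, (((n : ℝ) + 1) * c n) * ‖F n‖ := by
          rw [Finset.mul_sum]
          exact Finset.sum_congr rfl (fun n _ => by ring)
      _ ≤ b * (Real.sqrt (∑ n ∈ Finset.range N, (((n : ℝ) + 1) * c n) ^ 2) *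
              Real.sqrt (∑ n ∈ Finset.range N, ‖F n‖ ^ 2)) :=
          mul_le_mul_of_nonneg_left (Real.sum_mul_le_sqrt_mul_sqrt _ _ _) hb.le
      _ ≤ b * (C * ‖f‖) := by
          apply mul_le_mul_of_nonneg_left _ hb.le
          exact mul_le_mul (Real.sqrt_le_sqrt (hq N)) hsqrt2 (Real.sqrt_nonneg _) hC0
  -- the tail estimate
  have htail : ∀ N : ℕ, 1 ≤ N → ‖Mη (f - Mχ N f)‖ ≤ (N : ℝ) ^ (-α) * ‖f‖ := by
    intro N hN
    apply helper_norm_le _ _ (Real.rpow_nonneg (Nat.cast_nonneg N) _)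
    filter_upwards [hMη (f - Mχ N f), Lp.coeFn_sub f (Mχ N f), hMχ N f] with x h1 h2 h3
    rw [h1]
    have hsub : ((f - Mχ N f : Lp ℝ 2 (volume : Measure (EuclideanSpace ℝ (Fin 3)))) :
        EuclideanSpace ℝ (Fin 3) → ℝ) x = f x - (Mχ N f : EuclideanSpace ℝ (Fin 3) → ℝ) x := by
      simpa using h2
    rw [hsub, h3]
    by_cases h : ‖x‖ ≤ (N : ℝ)
    · rw [if_pos h, sub_self, mul_zero, abs_zero]
      positivity
    · have hN1 : (1:ℝ) ≤ (N : ℝ) := by exact_mod_cast hN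
      have hx1 : ¬ ‖x‖ ≤ 1 := by push_neg at h ⊢; linarith
      rw [if_neg h, if_neg hx1, sub_zero, abs_mul,
        abs_of_nonneg (Real.rpow_nonneg (norm_nonneg x) _)]
      exact mul_le_mul_of_nonneg_right
        (Real.rpow_le_rpow_of_nonpos (by linarith) (le_of_not_ge h) (by linarith))
        (abs_nonneg _)
  -- combine
  have hbound : ∀ N : ℕ, 1 ≤ N →
      ‖G (Mη f)‖ ≤ b * (C * ‖f‖) + ‖G‖ * ((N : ℝ) ^ (-α) * ‖f‖) := by
    intro N hN
    have hsplit : Mχ N f + (f - Mχ N f) = f := by abel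
    have hdecomp : G (Mη f) = G (Mη (Mχ N f)) + G (Mη (f - Mχ N f)) := by
      rw [← map_add, ← map_add, hsplit]
    rw [hdecomp]
    refine (norm_add_le _ _).trans (add_le_add (hmain N) ?_)
    exact (G.le_opNorm _).trans (mul_le_mul_of_nonneg_left (htail N hN) (norm_nonneg G))
  have hlim : Tendsto (fun N : ℕ => b * (C * ‖f‖) + ‖G‖ * ((N : ℝ) ^ (-α) * ‖f‖)) atTop
      (𝓝 (b * (C * ‖f‖) + ‖G‖ * (0 * ‖f‖))) := by
    exact tendsto_const_nhds.add
      ((((tendsto_rpow_neg_atTop hα0).comp tendsto_natCast_atTop_atTop).mul_const ‖f‖).const_mul ‖G‖)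
  have hfinal := ge_of_tendsto hlim (eventually_atTop.mpr ⟨1, hbound⟩)
  rw [zero_mul, mul_zero, add_zero] at hfinal
  rw [mul_assoc]
  exact hfinal
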